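/- If K and L are finite semimodular lattices of the same length and f : K → L is an injective lattice homomorphism, then f is cover-preserving, i.e., x ≺ y in K implies f(x) ≺ f(y) in L; moreover f(0)=0 and f(1)=1. -/

import Mathlib

/-- A lattice is (upper) semimodular if `x ⋖ y` implies that `x ⊔ z` is covered by
or equal to `y ⊔ z`. -/
def IsSemimodular (L : Type) [Lattice L] : Prop :=
  ∀ x y z : L, x ⋖ y → (x ⊔ z = y ⊔ z ∨ (x ⊔ z) ⋖ (y ⊔ z))

/-- The length of a finite lattice: the greatest `n` such that there is a strict
chain with `n + 1` elements. -/
noncomputable def latLength (L : Type) [Preorder L] : ℕ :=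
  sSup {n : ℕ | ∃ f : Fin (n + 1) → L, StrictMono f}

open Order

section aux
variable {α : Type} [Preorder α] [Fintype α]

lemma series_length_le (p : LTSeries α) : p.length ≤ latLength α := by
  apply le_csSup
  · refine ⟨Fintype.card α, ?_⟩
    rintro m ⟨g, hg⟩
    have := Fintype.card_le_of_injective g hg.injective
    simp only [Fintype.card_fin] at this
    omega
  · exact ⟨p.toFun, p.strictMono⟩

lemma exists_series_latLength [Nonempty α] : ∃ p : LTSeries α, p.length = latLength α := by
  have hmem : latLength α ∈ {n : ℕ | ∃ f : Fin (n + 1) → α, StrictMono f} := by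
    apply Nat.sSup_mem
    · exact ⟨0, fun _ => Classical.arbitrary α, fun i j h => by
        have := i.isLt; have := j.isLt; have := h; omega⟩
    · refine ⟨Fintype.card α, ?_⟩
      rintro m ⟨g, hg⟩
      have := Fintype.card_le_of_injective g hg.injective
      simp only [Fintype.card_fin] at this
      omega
  obtain ⟨g, hg⟩ := hmem
  exact ⟨⟨latLength α, g, fun i => hg Fin.castSucc_lt_succ⟩, rfl⟩

lemma coheight_le_lat (x : α) : coheight x ≤ (latLength α : ℕ∞) :=
  coheight_le fun p _ => by exact_mod_cast Nat.cast_le.mpr (series_length_le p)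

lemma height_le_lat (x : α) : height x ≤ (latLength α : ℕ∞) :=
  height_le fun p _ => by exact_mod_cast Nat.cast_le.mpr (series_length_le p)

lemma coheight_ne_top' (x : α) : coheight x ≠ ⊤ :=
  fun h => by simpa [h] using coheight_le_lat x

lemma height_ne_top' (x : α) : height x ≠ ⊤ :=
  fun h => by simpa [h] using height_le_lat x

lemma coheight_bot_eq [OrderBot α] : coheight (⊥ : α) = (latLength α : ℕ∞) := by
  refine le_antisymm (coheight_le_lat _) ?_
  obtain ⟨p, hp⟩ := exists_series_latLength (α := α)
  rw [← hp]
  exact length_le_coheight bot_le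

lemma height_add_coheight_le (x : α) :
    (height x).toNat + (coheight x).toNat ≤ latLength α := by
  obtain ⟨p, hp, hpl⟩ := exists_series_of_height_eq_coe x (ENat.coe_toNat (height_ne_top' x)).symm
  obtain ⟨q, hq, hql⟩ :=
    exists_series_of_coheight_eq_coe x (ENat.coe_toNat (coheight_ne_top' x)).symm
  have hle := series_length_le (p.smash q (by rw [hp, hq]))
  rw [RelSeries.smash_length, hpl, hql] at hle
  exact hle

lemma toNat_lt {x y : α} (h : x < y) : (coheight y).toNat < (coheight x).toNat := by
  have h2 := coheight_strictAnti h (lt_top_iff_ne_top.mpr (coheight_ne_top' y))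
  rw [← ENat.coe_toNat (coheight_ne_top' x), ← ENat.coe_toNat (coheight_ne_top' y)] at h2
  exact_mod_cast h2

lemma toNat_le_lat (x : α) : (coheight x).toNat ≤ latLength α := by
  have := coheight_le_lat x
  rw [← ENat.coe_toNat (coheight_ne_top' x)] at this
  exact_mod_cast this

end aux

section graded
variable {K : Type} [Lattice K] [Fintype K]

lemma graded_aux (hK : IsSemimodular K) :
    ∀ k : ℕ, ∀ x y : K, x ⋖ y → (coheight x).toNat = k →
      (coheight x).toNat = (coheight y).toNat + 1 := by
  intro k
  induction k using Nat.strong_induction_on with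
  | _ k IH =>
  intro x y hxy hk
  have hcy : (coheight y).toNat < k := hk ▸ toNat_lt hxy.lt
  have hk1 : 1 ≤ k := by omega
  have hcx : coheight x = (k : ℕ∞) := by rw [← ENat.coe_toNat (coheight_ne_top' x), hk]
  obtain ⟨p, hp, hpl⟩ := exists_series_of_coheight_eq_coe x hcx
  have hlt : 1 < p.length + 1 := by omega
  set i1 : Fin (p.length + 1) := ⟨1, hlt⟩ with hi1def
  set c1 : K := p i1 with hc1def
  have hxc1 : x < c1 := by
    have h0 : x = p ⟨0, by omega⟩ := by rw [← hp]; rfl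
    rw [h0, hc1def]
    exact p.strictMono (by simp [hi1def, Fin.lt_def])
  have hc1ge : ((k - 1 : ℕ) : ℕ∞) ≤ coheight c1 := by
    have h3 := length_le_coheight_head (p := p.drop i1)
    have h5 : (p.drop i1).head = c1 := RelSeries.head_drop p i1
    rw [h5] at h3
    have h4 : (p.drop i1).length = k - 1 := by
      rw [RelSeries.drop_length]
      have hv : (i1 : ℕ) = 1 := rfl
      omega
    rw [h4] at h3
    exact h3
  have hc1eq : (coheight c1).toNat = k - 1 := by
    have h1 : k - 1 ≤ (coheight c1).toNat := by
      rw [← ENat.coe_toNat (coheight_ne_top' c1)] at hc1ge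
      exact_mod_cast hc1ge
    have h2 : (coheight c1).toNat < k := hk ▸ toNat_lt hxc1
    omega
  have hxcovc1 : x ⋖ c1 := by
    refine ⟨hxc1, fun z hz hzc => ?_⟩
    have h1 : (coheight z).toNat < k := hk ▸ toNat_lt hz
    have h2 : (coheight c1).toNat < (coheight z).toNat := toNat_lt hzc
    omega
  by_cases hc1y : c1 = y
  · rw [hc1y] at hc1eq; omega
  · have hyt : y ⋖ c1 ⊔ y := by
      rcases hK x c1 y hxcovc1 with h | h <;> rw [sup_eq_right.mpr hxy.le] at h
      · have hc1ley : c1 ≤ y := sup_eq_right.mp h.symm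
        rcases lt_or_eq_of_le hc1ley with h' | h'
        · exact absurd h' (hxy.2 hxc1)
        · exact absurd h' hc1y
      · exact h
    have hc1t : c1 ⋖ c1 ⊔ y := by
      rcases hK x y c1 hxy with h | h <;> rw [sup_eq_right.mpr hxc1.le] at h
      · have hylec1 : y ≤ c1 := sup_eq_right.mp h.symm
        rcases lt_or_eq_of_le hylec1 with h' | h'
        · exact absurd h' (hxcovc1.2 hxy.lt)
        · exact absurd h'.symm hc1y
      · rwa [sup_comm y c1] at h
    have ht1 := IH (k - 1) (by omega) c1 (c1 ⊔ y) hc1t hc1eq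
    have ht2 := IH (coheight y).toNat hcy y (c1 ⊔ y) hyt rfl
    rw [hc1eq] at ht1
    omega

lemma graded (hK : IsSemimodular K) {x y : K} (h : x ⋖ y) :
    (coheight x).toNat = (coheight y).toNat + 1 :=
  graded_aux hK _ x y h rfl

lemma lat_le_aux (hK : IsSemimodular K) [BoundedOrder K] :
    ∀ m : ℕ, ∀ x : K, latLength K - (coheight x).toNat = m → m ≤ (height x).toNat := by
  intro m
  induction m using Nat.strong_induction_on with
  | _ m IH =>
  intro x hm
  rcases Nat.eq_zero_or_pos m with hm0 | hm0
  · omega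
  · have hbot : (coheight (⊥ : K)).toNat = latLength K := by
      rw [coheight_bot_eq]; simp
    have hxbot : x ≠ ⊥ := by
      intro h; rw [h, hbot] at hm; omega
    have hlt : (⊥ : K) < x := bot_lt_iff_ne_bot.mpr hxbot
    obtain ⟨w, hw⟩ := exists_covBy_of_wellFoundedGT (a := x) hlt.not_isMin
    have hgr := graded hK hw
    have hwle := toNat_le_lat w
    have hIH := IH (m - 1) (by omega) w (by omega)
    have hhlt : (height w).toNat < (height x).toNat := by
      have h2 := height_strictMono hw.lt (lt_top_iff_ne_top.mpr (height_ne_top' w))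
      rw [← ENat.coe_toNat (height_ne_top' w), ← ENat.coe_toNat (height_ne_top' x)] at h2
      exact_mod_cast h2
    omega

lemma lat_le_height_add_coheight (hK : IsSemimodular K) [BoundedOrder K] (x : K) :
    latLength K ≤ (height x).toNat + (coheight x).toNat := by
  have h1 := lat_le_aux hK (latLength K - (coheight x).toNat) x rfl
  have h2 := toNat_le_lat x
  omega

end graded

/-- An injective lattice homomorphism between finite semimodular
lattices of the same length is cover-preserving and preserves `0` and `1`. -/
theorem statement5 (K L : Type) [Lattice K] [Lattice L] [Fintype K] [Fintype L]
    [BoundedOrder K] [BoundedOrder L]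
    (hK : IsSemimodular K) (hL : IsSemimodular L)
    (hlen : latLength K = latLength L)
    (f : LatticeHom K L) (hinj : Function.Injective f) :
    (∀ x y : K, x ⋖ y → f x ⋖ f y) ∧ f ⊥ = ⊥ ∧ f ⊤ = ⊤ := by
  have hmono : Monotone f := fun a b h => OrderHomClass.mono f h
  have hsm : StrictMono f := hmono.strictMono_of_injective hinj
  have key : ∀ x : K, (coheight (f x)).toNat = (coheight x).toNat := by
    intro x
    have h1 : (coheight x).toNat ≤ (coheight (f x)).toNat := by
      have h := coheight_le_coheight_apply_of_strictMono f hsm x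
      rw [← ENat.coe_toNat (coheight_ne_top' x),
        ← ENat.coe_toNat (coheight_ne_top' (f x))] at h
      exact_mod_cast h
    have h2 : (height x).toNat ≤ (height (f x)).toNat := by
      have h := height_le_height_apply_of_strictMono f hsm x
      rw [← ENat.coe_toNat (height_ne_top' x),
        ← ENat.coe_toNat (height_ne_top' (f x))] at h
      exact_mod_cast h
    have h3 := height_add_coheight_le (f x)
    have h4 := lat_le_height_add_coheight hK x
    omega
  refine ⟨fun x y hxy => ?_, ?_, ?_⟩
  · refine ⟨hsm hxy.lt, fun z hz1 hz2 => ?_⟩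
    have e1 := key x
    have e2 := key y
    have hgr := graded hK hxy
    have t1 := toNat_lt hz1
    have t2 := toNat_lt hz2
    omega
  · by_contra h
    have hlt : (⊥ : L) < f ⊥ := bot_lt_iff_ne_bot.mpr (fun h' => h h')
    have t1 := toNat_lt hlt
    have e1 := key (⊥ : K)
    have hbK : (coheight (⊥ : K)).toNat = latLength K := by rw [coheight_bot_eq]; simp
    have hbL : (coheight (⊥ : L)).toNat = latLength L := by rw [coheight_bot_eq]; simp
    omega
  · have h0 : (coheight (f ⊤)).toNat = 0 := by
      rw [key ⊤]
      simp [coheight_top]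
    have : coheight (f ⊤) = 0 := by
      rw [← ENat.coe_toNat (coheight_ne_top' (f ⊤)), h0]
      rfl
    exact (coheight_eq_zero.mp this).eq_top
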